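/- Let q ≥ 2 and p be integers, a a real number, and b, d : ℕ → ℝ periodic functions (of some common period π ≥ 1) with b(m) ≤ 0 for all m. For k ∈ S_n set f(k) = −pk(qk+1) + a(2qk+1)² + b(|2qk+1|)·|2qk+1| + d(|2qk+1|). Set M₁ = max{ |b(i) − b(j)| : i, j ∈ ℕ, i ≡ j (mod 2) } and M₂ = max{ 2b(i) + |b(i) − b(j)| + |d(i) − d(j)| : i, j ∈ ℕ, i ≡ j (mod 2) }. If p − (4a − M₁)q < 0, or p − (4a + M₁)q > max{0, M₂}, then there exists an integer N such that for every n ≥ N the function f attains its maximum on S_n at a unique point: there is k* ∈ S_n with f(k) < f(k*) for every k ∈ S_n with k ≠ k*. (The core 'unique maximal term' claim in the proof of Proposition 4.4.) -/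

import Mathlib

private lemma s6_periodic_bound {π : ℕ} (hπ : 1 ≤ π) (b : ℕ → ℝ)
    (hb : ∀ m, b (m + π) = b m) : ∃ B : ℝ, 0 ≤ B ∧ ∀ m, |b m| ≤ B := by
  have key : ∀ m, b m = b (m % π) := by
    intro m
    induction m using Nat.strong_induction_on with
    | _ m ih =>
      rcases lt_or_ge m π with h | h
      · rw [Nat.mod_eq_of_lt h]
      · have h1 : m - π + π = m := Nat.sub_add_cancel h
        have h2 := hb (m - π)
        rw [h1] at h2
        rw [h2, ih (m - π) (by omega)]
        have h3 : (m - π) % π = m % π := (Nat.mod_eq_sub_mod h).symm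
        rw [h3]
  refine ⟨(Finset.range π).sup' ⟨0, Finset.mem_range.mpr hπ⟩ (fun k => |b k|),
    le_trans (abs_nonneg (b 0)) (Finset.le_sup' (fun k => |b k|) (Finset.mem_range.mpr hπ)), fun m => ?_⟩
  rw [key m]
  exact Finset.le_sup' (fun k => |b k|) (Finset.mem_range.mpr (Nat.mod_lt _ hπ))

private lemma s6_key1 (α M₁ B D S T bi bI di dI : ℝ) (hS : 1 ≤ S) (hTS : S ≤ T)
    (hΔb : |bI - bi| ≤ M₁) (hbi : |bi| ≤ B) (hbI : |bI| ≤ B)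
    (hdi : |di| ≤ D) (hdI : |dI| ≤ D) (hM₁0 : 0 ≤ M₁) (hα : M₁ < 4 * α)
    (hT : 2 * B + 2 * D + 1 ≤ (4 * α - M₁) * T) :
    α * (T - S) ^ 2 + bi * (T - S) + di < α * (T + S) ^ 2 + bI * (T + S) + dI := by
  have hT0 : (0:ℝ) ≤ T := le_trans (le_trans zero_le_one hS) hTS
  have hS0 : (0:ℝ) ≤ S := le_trans zero_le_one hS
  have hD0 : (0:ℝ) ≤ D := le_trans (abs_nonneg _) hdi
  have hA : -(M₁ * T) ≤ (bI - bi) * T := by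
    have h1 : -M₁ ≤ bI - bi := neg_le_of_abs_le hΔb
    nlinarith
  have hB' : -(2 * B * S) ≤ (bI + bi) * S := by
    have h1 := abs_le.1 hbi
    have h2 := abs_le.1 hbI
    nlinarith
  have hC : -(2 * D) ≤ dI - di := by
    have h1 := abs_le.1 hdi
    have h2 := abs_le.1 hdI
    linarith
  have hM1T : M₁ * T ≤ M₁ * (S * T) := by nlinarith [mul_nonneg (mul_nonneg hM₁0 hT0) (sub_nonneg.2 hS)]
  have h2BS : 2 * B * S ≤ ((4 * α - M₁) * T - 2 * D - 1) * S :=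
    mul_le_mul_of_nonneg_right (by linarith) hS0
  nlinarith [hA, hB', hC, hM1T, h2BS, hS, hD0]

private lemma s6_key2 (α M₁ M₂ q S T bi bi' di di' : ℝ) (hq : 2 ≤ q)
    (hS : 1 ≤ S) (hT : q ≤ T)
    (hΔb : |bi - bi'| ≤ M₁) (hM2 : 2 * bi + |bi - bi'| + |di - di'| ≤ M₂)
    (hM₁0 : 0 ≤ M₁) (hkey : (4 * α + M₁) * q < -(max 0 M₂)) :
    α * (T + S) ^ 2 + bi * (T + S) + di < α * (T - S) ^ 2 + bi' * (T - S) + di' := by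
  have hq0 : (0:ℝ) < q := by linarith
  have hT0 : (0:ℝ) < T := lt_of_lt_of_le hq0 hT
  have hS0 : (0:ℝ) < S := lt_of_lt_of_le one_pos hS
  set m0 := max 0 M₂ with hm0def
  have hm00 : (0:ℝ) ≤ m0 := le_max_left _ _
  have hM2' : 2 * bi + |bi - bi'| + |di - di'| ≤ m0 := le_trans hM2 (le_max_right _ _)
  have hmain : 4 * α * S * T + M₁ * T + m0 * S < 0 := by
    nlinarith [mul_lt_mul_of_pos_right hkey (mul_pos hS0 hT0),
      mul_nonneg (mul_nonneg (mul_nonneg hM₁0 hq0.le) hT0.le) (sub_nonneg.2 hS),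
      mul_nonneg (mul_nonneg hm00 hS0.le) (sub_nonneg.2 hT), hq0]
  have hA : (bi - bi') * T ≤ M₁ * T :=
    mul_le_mul_of_nonneg_right (le_trans (le_abs_self _) hΔb) hT0.le
  have hB : (bi + bi') * S ≤ (2 * bi + |bi - bi'|) * S := by
    refine mul_le_mul_of_nonneg_right ?_ hS0.le
    have h1 : bi' - bi ≤ |bi - bi'| := by rw [abs_sub_comm]; exact le_abs_self _
    linarith
  have hC : di - di' ≤ |di - di'| * S :=
    le_trans (le_abs_self _) (le_mul_of_one_le_right (abs_nonneg _) hS)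
  have hD2 : (2 * bi + |bi - bi'|) * S + |di - di'| * S ≤ m0 * S := by
    have := mul_le_mul_of_nonneg_right hM2' hS0.le
    nlinarith [this]
  nlinarith [hA, hB, hC, hD2, hmain]

/-- The core 'unique maximal term' claim in the proof of Proposition 4.4 of
Kalfagianni–Tran.  Here the set `S_n` of integers/half-odd-integers `k` with
`|k| ≤ (n−1)/2` and `k ≡ (n−1)/2 (mod 1)` is parametrized as `k = j/2` by the
integers `j` with `|j| ≤ n − 1` and `j ≡ n − 1 (mod 2)`, and `f j` denotes the
value of the function of the statement at `k = j/2`; note `2qk + 1 = qj + 1`. -/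
theorem statement6 (p q : ℤ) (hq : 2 ≤ q) (a : ℝ)
    (π : ℕ) (hπ : 1 ≤ π) (b d : ℕ → ℝ)
    (hbper : ∀ m : ℕ, b (m + π) = b m) (hdper : ∀ m : ℕ, d (m + π) = d m)
    (hble : ∀ m : ℕ, b m ≤ 0)
    (f : ℤ → ℝ)
    (hf : ∀ j : ℤ, f j =
      -(p : ℝ) * ((j : ℝ) / 2) * ((q : ℝ) * ((j : ℝ) / 2) + 1) +
        a * ((q : ℝ) * (j : ℝ) + 1) ^ 2 +
        b (q * j + 1).natAbs * |(q : ℝ) * (j : ℝ) + 1| + d (q * j + 1).natAbs)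
    (M₁ M₂ : ℝ)
    (hM₁ : IsGreatest {x : ℝ | ∃ i j : ℕ, i % 2 = j % 2 ∧ x = |b i - b j|} M₁)
    (hM₂ : IsGreatest
      {x : ℝ | ∃ i j : ℕ, i % 2 = j % 2 ∧ x = 2 * b i + |b i - b j| + |d i - d j|} M₂)
    (hcond : (p : ℝ) - (4 * a - M₁) * (q : ℝ) < 0 ∨
      max 0 M₂ < (p : ℝ) - (4 * a + M₁) * (q : ℝ)) :
    ∃ N : ℤ, ∀ n : ℤ, N ≤ n →
      ∃ j' : ℤ, (|j'| ≤ n - 1 ∧ j' % 2 = (n - 1) % 2) ∧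
        ∀ j : ℤ, |j| ≤ n - 1 → j % 2 = (n - 1) % 2 → j ≠ j' → f j < f j' := by
  have hq0 : (0:ℝ) < (q:ℝ) := by exact_mod_cast lt_of_lt_of_le zero_lt_two hq
  have hqR : (2:ℝ) ≤ (q:ℝ) := by exact_mod_cast hq
  have hqne : (q:ℝ) ≠ 0 := ne_of_gt hq0
  set α : ℝ := a - (p:ℝ) / (4 * (q:ℝ)) with hαdef
  have h4αq : 4 * α * (q:ℝ) = 4 * a * (q:ℝ) - (p:ℝ) := by
    rw [hαdef]; field_simp
  obtain ⟨B, hB0, hB⟩ := s6_periodic_bound hπ b hbper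
  obtain ⟨D, hD0, hD⟩ := s6_periodic_bound hπ d hdper
  have hM₁0 : (0:ℝ) ≤ M₁ := hM₁.2 ⟨0, 0, rfl, by simp⟩
  have hfk : ∀ j : ℤ, f j = α * (((q*j+1).natAbs : ℕ) : ℝ)^2 +
      b (q*j+1).natAbs * (((q*j+1).natAbs : ℕ) : ℝ) + d (q*j+1).natAbs + (a - α) := by
    intro j
    have hx : (((q*j+1).natAbs : ℕ) : ℝ) = |(q:ℝ)*(j:ℝ)+1| := by
      rw [Nat.cast_natAbs]
      push_cast
      ring_nf
    rw [hf j, hx]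
    have h2 : |(q:ℝ)*(j:ℝ)+1|^2 = ((q:ℝ)*(j:ℝ)+1)^2 := sq_abs _
    rw [h2, hαdef]
    field_simp
    ring
  have hpar : ∀ j j' : ℤ, j % 2 = j' % 2 →
      (q*j+1).natAbs % 2 = (q*j'+1).natAbs % 2 := by
    intro j j' h
    obtain ⟨k, hk⟩ : (2:ℤ) ∣ (j - j') := by omega
    have hqq : q*j = q*j' + 2*(q*k) := by linear_combination q * hk
    have key : ∀ u v w : ℤ, u = v + 2*w → (u+1).natAbs % 2 = (v+1).natAbs % 2 := by
      intro u v w h'; omega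
    exact key _ _ _ hqq
  rcases hcond with h1 | h2
  · -- Case 1: maximiser at j' = n - 1
    have hε : M₁ < 4 * α := by
      have h' : M₁ * (q:ℝ) < 4 * α * (q:ℝ) := by rw [h4αq]; nlinarith [h1]
      exact lt_of_mul_lt_mul_right h' hq0.le
    set ε : ℝ := 4 * α - M₁ with hεdef
    have hε0 : (0:ℝ) < ε := by rw [hεdef]; linarith
    set x : ℝ := (2 * (2*B + 2*D + 1)) / ε with hxdef
    have hx0 : 0 < x := by rw [hxdef]; positivity
    refine ⟨⌈x⌉ + 2, fun n hn => ?_⟩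
    have hn2 : (2:ℤ) ≤ n := by
      have : (1:ℤ) ≤ ⌈x⌉ := Int.ceil_pos.mpr hx0
      omega
    have hnx : x ≤ (n:ℝ) - 1 := by
      have h1' : x ≤ (⌈x⌉ : ℝ) := Int.le_ceil x
      have h2' : ((⌈x⌉ + 2 : ℤ) : ℝ) ≤ (n:ℝ) := by exact_mod_cast hn
      push_cast at h2'
      linarith
    refine ⟨n - 1, ⟨by rw [abs_of_nonneg (by omega : (0:ℤ) ≤ n - 1)], rfl⟩, ?_⟩
    intro j hjle hjpar hjne
    rw [abs_le] at hjle
    have hq2 : (2:ℤ) ≤ q := hq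
    have hn1 : (1:ℤ) ≤ n - 1 := by omega
    have hIpos : (0:ℤ) ≤ q*(n-1)+1 := by nlinarith
    have hIval : (((q*(n-1)+1).natAbs : ℕ) : ℤ) = q*(n-1)+1 := Int.natAbs_of_nonneg hIpos
    have hiabs : (((q*j+1).natAbs : ℕ) : ℤ) = |q*j+1| := Int.natCast_natAbs _
    -- i + 2 ≤ I
    have hii : (((q*j+1).natAbs : ℕ) : ℤ) + 2 ≤ (((q*(n-1)+1).natAbs : ℕ) : ℤ) := by
      rcases eq_or_ne j (-(n-1)) with rfl | hne'
      · have h1' : (1:ℤ) ≤ q*(n-1) := by nlinarith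
        have habs : |q*(-(n-1))+1| = q*(n-1) - 1 := by
          rw [abs_of_nonpos (by linarith [show q*(-(n-1)) = -(q*(n-1)) from by ring])]
          ring
        rw [hiabs, habs, hIval]
        linarith
      · have hj3 : -(n-3) ≤ j ∧ j ≤ n - 3 := by omega
        have hub : q*j ≤ q*(n-3) := mul_le_mul_of_nonneg_left hj3.2 (by linarith)
        have hlb : q*(-(n-3)) ≤ q*j := mul_le_mul_of_nonneg_left hj3.1 (by linarith)
        have hrg : q*(-(n-3)) = -(q*(n-3)) := by ring
        have habs : |q*j+1| ≤ q*(n-3)+1 := by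
          rw [abs_le]
          constructor
          · linarith
          · linarith
        have hqn : q*(n-1) = q*(n-3) + 2*q := by ring
        rw [hiabs, hIval]
        linarith
    -- apply key1
    set i : ℕ := (q*j+1).natAbs with hidef
    set I : ℕ := (q*(n-1)+1).natAbs with hIdef
    set S : ℝ := ((I:ℝ) - (i:ℝ))/2 with hSdef
    set T : ℝ := ((I:ℝ) + (i:ℝ))/2 with hTdef
    have hiiR : (i:ℝ) + 2 ≤ (I:ℝ) := by exact_mod_cast hii
    have hi0 : (0:ℝ) ≤ (i:ℝ) := Nat.cast_nonneg _
    have hS1 : 1 ≤ S := by rw [hSdef]; linarith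
    have hTS : S ≤ T := by rw [hSdef, hTdef]; linarith
    have hIR : ((I:ℕ):ℝ) = (q:ℝ)*((n:ℝ)-1)+1 := by
      have := hIval
      have h' : ((I:ℕ):ℝ) = ((q*(n-1)+1 : ℤ) : ℝ) := by exact_mod_cast congrArg (fun z : ℤ => (z:ℝ)) this
      rw [h']; push_cast; ring
    have hT' : 2*B + 2*D + 1 ≤ ε * T := by
      have hn1R : (1:ℝ) ≤ (n:ℝ) - 1 := by exact_mod_cast hn1
      have hIge : (n:ℝ) - 1 ≤ (I:ℝ) := by rw [hIR]; nlinarith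
      have hTge : x/2 ≤ T := by rw [hTdef]; linarith
      have hx2 : ε * (x/2) = 2*B + 2*D + 1 := by rw [hxdef]; field_simp
      have h5 := mul_le_mul_of_nonneg_left hTge hε0.le
      exact le_trans (le_of_eq hx2.symm) h5
    have hΔb : |b I - b i| ≤ M₁ := hM₁.2 ⟨I, i, (hpar j (n-1) hjpar).symm, rfl⟩
    have happ := s6_key1 α M₁ B D S T (b i) (b I) (d i) (d I) hS1 hTS hΔb
      (hB i) (hB I) (hD i) (hD I) hM₁0 hε (by rw [← hεdef]; exact hT')
    have e1 : (i:ℝ) = T - S := by rw [hSdef, hTdef]; ring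
    have e2 : (I:ℝ) = T + S := by rw [hSdef, hTdef]; ring
    rw [hfk j, hfk (n-1), ← hidef, ← hIdef, e1, e2]
    linarith [happ]
  · -- Case 2: maximiser at j' = 0 or j' = -1
    have hkeyR : (4*α + M₁) * (q:ℝ) < -(max 0 M₂) := by nlinarith [h2, h4αq]
    have main : ∀ j' j : ℤ, j % 2 = j' % 2 →
        (((q*j'+1).natAbs : ℕ) : ℤ) + 2 ≤ (((q*j+1).natAbs : ℕ) : ℤ) →
        2*q ≤ (((q*j+1).natAbs : ℕ) : ℤ) + (((q*j'+1).natAbs : ℕ) : ℤ) →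
        f j < f j' := by
      intro j' j hp hle hsum
      set i : ℕ := (q*j+1).natAbs with hidef
      set i' : ℕ := (q*j'+1).natAbs with hi'def
      set S : ℝ := ((i:ℝ) - (i':ℝ))/2 with hSdef
      set T : ℝ := ((i:ℝ) + (i':ℝ))/2 with hTdef
      have hleR : (i':ℝ) + 2 ≤ (i:ℝ) := by exact_mod_cast hle
      have hsumR : 2*(q:ℝ) ≤ (i:ℝ) + (i':ℝ) := by exact_mod_cast hsum
      have hS1 : 1 ≤ S := by rw [hSdef]; linarith
      have hT : (q:ℝ) ≤ T := by rw [hTdef]; linarith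
      have hΔb : |b i - b i'| ≤ M₁ := hM₁.2 ⟨i, i', hpar j j' hp, rfl⟩
      have hM2b : 2*b i + |b i - b i'| + |d i - d i'| ≤ M₂ := hM₂.2 ⟨i, i', hpar j j' hp, rfl⟩
      have happ := s6_key2 α M₁ M₂ (q:ℝ) S T (b i) (b i') (d i) (d i') hqR hS1 hT hΔb hM2b hM₁0 hkeyR
      have e1 : (i:ℝ) = T + S := by rw [hSdef, hTdef]; ring
      have e2 : (i':ℝ) = T - S := by rw [hSdef, hTdef]; ring
      rw [hfk j, hfk j', ← hidef, ← hi'def, e1, e2]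
      linarith [happ]
    refine ⟨2, fun n hn => ?_⟩
    by_cases hpar2 : (n - 1) % 2 = 0
    · refine ⟨0, ⟨by rw [abs_zero]; omega, by omega⟩, ?_⟩
      intro j hjle hjpar hjne
      rw [abs_le] at hjle
      have hi'val : (((q*0+1).natAbs : ℕ) : ℤ) = 1 := by norm_num
      have hj2 : 2 ≤ j ∨ j ≤ -2 := by omega
      have hige : (2*q - 1 : ℤ) ≤ (((q*j+1).natAbs : ℕ) : ℤ) := by
        rw [Int.natCast_natAbs]
        rcases hj2 with h | h
        · have h' : q*2 ≤ q*j := mul_le_mul_of_nonneg_left h (by linarith)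
          calc (2*q-1:ℤ) ≤ q*j+1 := by linarith
          _ ≤ |q*j+1| := le_abs_self _
        · have h' : q*j ≤ q*(-2) := mul_le_mul_of_nonneg_left h (by linarith)
          have hr : q*(-2) = -(2*q) := by ring
          calc (2*q-1:ℤ) ≤ -(q*j+1) := by linarith
          _ ≤ |q*j+1| := neg_le_abs _
      exact main 0 j (by omega) (by omega) (by omega)
    · refine ⟨-1, ⟨by rw [abs_of_nonpos (by omega : (-1:ℤ) ≤ 0)]; omega, by omega⟩, ?_⟩
      intro j hjle hjpar hjne
      rw [abs_le] at hjle
      have hi'val : (((q*(-1)+1).natAbs : ℕ) : ℤ) = q - 1 := by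
        rw [Int.natCast_natAbs, abs_of_nonpos (by linarith [show q*(-1) = -q from by ring])]
        ring
      have hj2 : 1 ≤ j ∨ j ≤ -3 := by omega
      have hige : (q + 1 : ℤ) ≤ (((q*j+1).natAbs : ℕ) : ℤ) := by
        rw [Int.natCast_natAbs]
        rcases hj2 with h | h
        · have h' : q*1 ≤ q*j := mul_le_mul_of_nonneg_left h (by linarith)
          calc (q+1:ℤ) ≤ q*j+1 := by linarith [show q*1 = q from by ring]
          _ ≤ |q*j+1| := le_abs_self _
        · have h' : q*j ≤ q*(-3) := mul_le_mul_of_nonneg_left h (by linarith)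
          have hr : q*(-3) = -(3*q) := by ring
          calc (q+1:ℤ) ≤ -(q*j+1) := by linarith
          _ ≤ |q*j+1| := neg_le_abs _
      exact main (-1) j (by omega) (by omega) (by omega)
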